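/- arXiv:2301.03161 — 4 statements merged into one kernel-verified Lean document; each statement's English description precedes it below -/
import Mathlib

section
/- Node cover equivalent world vertices are interchangeable in any subgraph isomorphism extending a partial match on a node cover. -/
def StructEquiv {V : Type*} (E : V → V → Prop) (v w : V) : Prop :=
  (∀ u, u ≠ v → u ≠ w → ((E u v ↔ E u w) ∧ (E v u ↔ E w u))) ∧ (E v w ↔ E w v)

def SubIso {VT VW : Type*} (ET : VT → VT → Prop) (EW : VW → VW → Prop) (f : VT → VW) : Prop :=
  Function.Injective f ∧ ∀ a b, ET a b → EW (f a) (f b)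

/-- `N` is a node cover: every template edge has an endpoint in `N`. -/
def NodeCover {VT : Type*} (ET : VT → VT → Prop) (N : Set VT) : Prop :=
  ∀ a b, ET a b → a ∈ N ∨ b ∈ N

/-- A partial match on `N`: injective and edge-preserving on `N`. -/
def PartialMatch {VT VW : Type*} (ET : VT → VT → Prop) (EW : VW → VW → Prop)
    (N : Set VT) (M : N → VW) : Prop :=
  Function.Injective M ∧ ∀ a b : N, ET a b → EW (M a) (M b)

/-- World vertex `c` is joinable to the partial match `M` as a candidate for `u`. -/
def Joinable {VT VW : Type*} (ET : VT → VT → Prop) (EW : VW → VW → Prop)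
    (N : Set VT) (M : N → VW) (u : VT) (c : VW) : Prop :=
  ∀ v : N, (ET v u → EW (M v) c) ∧ (ET u v → EW c (M v))

theorem nodeCoverEquiv_interchangeable {VT VW : Type*} [DecidableEq VT]
    (ET : VT → VT → Prop) (EW : VW → VW → Prop)
    (N : Set VT) (hN : NodeCover ET N) (M : N → VW) (hM : PartialMatch ET EW N M)
    (w₁ w₂ : VW) (hw₁ : w₁ ∉ Set.range M) (hw₂ : w₂ ∉ Set.range M)
    (hnc : ∀ u : VT, u ∉ N → (Joinable ET EW N M u w₁ ↔ Joinable ET EW N M u w₂))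
    (f : VT → VW) (hf : SubIso ET EW f) (hext : ∀ v : N, f v = M v) :
    (∀ v₁ v₂ : VT, f v₁ = w₁ → f v₂ = w₂ →
      SubIso ET EW (fun u => if u = v₁ then w₂ else if u = v₂ then w₁ else f u) ∧
      ∀ v : N, (if (v : VT) = v₁ then w₂ else if (v : VT) = v₂ then w₁ else f v) = M v) ∧
    (∀ v₁ : VT, f v₁ = w₁ → w₂ ∉ Set.range f →
      SubIso ET EW (Function.update f v₁ w₂) ∧
      ∀ v : N, Function.update f v₁ w₂ v = M v) := by
  obtain ⟨finj, fedge⟩ := hf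
  classical
  have hnot : ∀ v : VT, (f v = w₁ ∨ f v = w₂) → v ∉ N := by
    rintro v (h | h) hv
    · exact hw₁ ⟨⟨v, hv⟩, (hext ⟨v, hv⟩).symm.trans h⟩
    · exact hw₂ ⟨⟨v, hv⟩, (hext ⟨v, hv⟩).symm.trans h⟩
  have hjoin : ∀ v : VT, Joinable ET EW N M v (f v) := by
    intro v u
    refine ⟨fun h => ?_, fun h => ?_⟩
    · have := fedge u v h; rwa [hext] at this
    · have := fedge v u h; rwa [hext] at this
  constructor
  · intro v₁ v₂ h1 h2
    have hv₁N : v₁ ∉ N := hnot v₁ (Or.inl h1)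
    have hv₂N : v₂ ∉ N := hnot v₂ (Or.inr h2)
    have j1 : Joinable ET EW N M v₁ w₂ := (hnc v₁ hv₁N).1 (h1 ▸ hjoin v₁)
    have j2 : Joinable ET EW N M v₂ w₁ := (hnc v₂ hv₂N).2 (h2 ▸ hjoin v₂)
    refine ⟨⟨?_, ?_⟩, ?_⟩
    · have heq : (fun u => if u = v₁ then w₂ else if u = v₂ then w₁ else f u)
          = (Equiv.swap w₁ w₂) ∘ f := by
        funext u
        by_cases hu1 : u = v₁
        · subst hu1; simp [h1]
        · by_cases hu2 : u = v₂
          · subst hu2; simp [h2, hu1]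
          · have hfu1 : f u ≠ w₁ := fun h => hu1 (finj (h.trans h1.symm))
            have hfu2 : f u ≠ w₂ := fun h => hu2 (finj (h.trans h2.symm))
            simp [hu1, hu2, Equiv.swap_apply_of_ne_of_ne hfu1 hfu2]
      rw [heq]
      exact (Equiv.swap w₁ w₂).injective.comp finj
    · intro a b hab
      by_cases ha1 : a = v₁
      · subst ha1
        by_cases hb1 : b = a
        · subst hb1; exact absurd (hN _ _ hab) (by simp [hv₁N])
        · by_cases hb2 : b = v₂
          · subst hb2; exact absurd (hN _ _ hab) (by simp [hv₁N, hv₂N])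
          · have hbN : b ∈ N := (hN _ _ hab).resolve_left hv₁N
            simp only [if_pos rfl, if_neg hb1, if_neg hb2]
            have := (j1 ⟨b, hbN⟩).2 hab
            rwa [← hext ⟨b, hbN⟩] at this
      · by_cases ha2 : a = v₂
        · subst ha2
          by_cases hb1 : b = v₁
          · subst hb1; exact absurd (hN _ _ hab) (by simp [hv₁N, hv₂N])
          · by_cases hb2 : b = a
            · subst hb2; exact absurd (hN _ _ hab) (by simp [hv₂N])
            · have hbN : b ∈ N := (hN _ _ hab).resolve_left hv₂N
              simp only [if_pos rfl, if_neg ha1, if_neg hb1, if_neg hb2]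
              have := (j2 ⟨b, hbN⟩).2 hab
              rwa [← hext ⟨b, hbN⟩] at this
        · by_cases hb1 : b = v₁
          · subst hb1
            have haN : a ∈ N := (hN _ _ hab).resolve_right hv₁N
            simp only [if_neg ha1, if_neg ha2, if_pos rfl]
            have := (j1 ⟨a, haN⟩).1 hab
            rwa [← hext ⟨a, haN⟩] at this
          · by_cases hb2 : b = v₂
            · subst hb2
              have haN : a ∈ N := (hN _ _ hab).resolve_right hv₂N
              simp only [if_neg ha1, if_neg ha2, if_neg hb1, if_pos rfl]
              have := (j2 ⟨a, haN⟩).1 hab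
              rwa [← hext ⟨a, haN⟩] at this
            · simp only [if_neg ha1, if_neg ha2, if_neg hb1, if_neg hb2]
              exact fedge a b hab
    · intro v
      have h1 : (v : VT) ≠ v₁ := fun h => hv₁N (h ▸ v.2)
      have h2 : (v : VT) ≠ v₂ := fun h => hv₂N (h ▸ v.2)
      simp only [if_neg h1, if_neg h2]
      exact hext v
  · intro v₁ h1 hw₂f
    have hv₁N : v₁ ∉ N := hnot v₁ (Or.inl h1)
    have j1 : Joinable ET EW N M v₁ w₂ := (hnc v₁ hv₁N).1 (h1 ▸ hjoin v₁)
    refine ⟨⟨?_, ?_⟩, ?_⟩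
    · intro a b h
      by_cases ha : a = v₁ <;> by_cases hb : b = v₁
      · rw [ha, hb]
      · rw [Function.update_apply, Function.update_apply, if_pos ha, if_neg hb] at h
        exact absurd ⟨b, h.symm⟩ hw₂f
      · rw [Function.update_apply, Function.update_apply, if_neg ha, if_pos hb] at h
        exact absurd ⟨a, h⟩ hw₂f
      · rw [Function.update_apply, Function.update_apply, if_neg ha, if_neg hb] at h
        exact finj h
    · intro a b hab
      by_cases ha : a = v₁
      · subst ha
        by_cases hb : b = a
        · subst hb; exact absurd (hN _ _ hab) (by simp [hv₁N])
        · have hbN : b ∈ N := (hN _ _ hab).resolve_left hv₁N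
          rw [Function.update_self, Function.update_of_ne hb]
          have := (j1 ⟨b, hbN⟩).2 hab
          rwa [← hext ⟨b, hbN⟩] at this
      · by_cases hb : b = v₁
        · subst hb
          have haN : a ∈ N := (hN _ _ hab).resolve_right hv₁N
          rw [Function.update_self, Function.update_of_ne ha]
          have := (j1 ⟨a, haN⟩).1 hab
          rwa [← hext ⟨a, haN⟩] at this
        · rw [Function.update_of_ne ha, Function.update_of_ne hb]
          exact fedge a b hab
    · intro v
      have h1 : (v : VT) ≠ v₁ := fun h => hv₁N (h ▸ v.2)
      rw [Function.update_of_ne h1]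
      exact hext v
end

section
/- For vertices outside a node cover with candidate sets reduced to joinable vertices, node cover equivalence coincides with full candidate equivalence. -/
/-- The vertices of the candidate structure: template vertex–candidate pairs. -/
def CandVert {VT VW : Type*} (C : VT → Set VW) : Type _ := {p : VT × VW // p.2 ∈ C p.1}

/-- The edge relation of the candidate structure. -/
def CandEdge {VT VW : Type*} (C : VT → Set VW) (ET : VT → VT → Prop) (EW : VW → VW → Prop) :
    CandVert C → CandVert C → Prop :=
  fun p q => ET p.1.1 q.1.1 ∧ EW p.1.2 q.1.2

/-- Candidate equivalence of world vertices with respect to template vertex `u`. -/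
def CandEquivAt {VT VW : Type*} (C : VT → Set VW) (ET : VT → VT → Prop) (EW : VW → VW → Prop)
    (u : VT) (c₁ c₂ : VW) : Prop :=
  (c₁ ∉ C u ∧ c₂ ∉ C u) ∨
  ∃ (h₁ : c₁ ∈ C u) (h₂ : c₂ ∈ C u),
    StructEquiv (CandEdge C ET EW) ⟨(u, c₁), h₁⟩ ⟨(u, c₂), h₂⟩

/-- Full candidate equivalence. -/
def FullCandEquiv {VT VW : Type*} (C : VT → Set VW) (ET : VT → VT → Prop) (EW : VW → VW → Prop)
    (c₁ c₂ : VW) : Prop :=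
  ∀ u, CandEquivAt C ET EW u c₁ c₂

/-- The candidate sets after a partial match `M` on a node cover `N`:
matched vertices keep only their match, unmatched vertices get all joinable vertices. -/
def NCCands {VT VW : Type*} (ET : VT → VT → Prop) (EW : VW → VW → Prop)
    (N : Set VT) (M : N → VW) : VT → Set VW :=
  fun u => {c | (∃ h : u ∈ N, c = M ⟨u, h⟩) ∨ (u ∉ N ∧ Joinable ET EW N M u c)}

theorem nodeCoverEquiv_iff_fullCandEquiv {VT VW : Type*}
    (ET : VT → VT → Prop) (EW : VW → VW → Prop)
    (N : Set VT) (hN : NodeCover ET N) (M : N → VW) (hM : PartialMatch ET EW N M)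
    (w₁ w₂ : VW) (hw₁ : w₁ ∉ Set.range M) (hw₂ : w₂ ∉ Set.range M) :
    (∀ u : VT, u ∉ N → (w₁ ∈ NCCands ET EW N M u ↔ w₂ ∈ NCCands ET EW N M u)) ↔
      FullCandEquiv (NCCands ET EW N M) ET EW w₁ w₂ := by
  constructor
  · intro h u
    by_cases hu : u ∈ N
    · left
      refine ⟨?_, ?_⟩
      · rintro (⟨h', rfl⟩ | ⟨hn, -⟩)
        · exact hw₁ ⟨⟨u, h'⟩, rfl⟩
        · exact hn hu
      · rintro (⟨h', rfl⟩ | ⟨hn, -⟩)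
        · exact hw₂ ⟨⟨u, h'⟩, rfl⟩
        · exact hn hu
    · by_cases h1 : w₁ ∈ NCCands ET EW N M u
      · have h2 : w₂ ∈ NCCands ET EW N M u := (h u hu).mp h1
        have j1 : Joinable ET EW N M u w₁ := by
          rcases h1 with ⟨hn, -⟩ | ⟨-, j⟩
          · exact absurd hn hu
          · exact j
        have j2 : Joinable ET EW N M u w₂ := by
          rcases h2 with ⟨hn, -⟩ | ⟨-, j⟩
          · exact absurd hn hu
          · exact j
        right
        refine ⟨h1, h2, ?_, ?_⟩
        · rintro ⟨⟨v, c⟩, hc⟩ - -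
          constructor
          · constructor <;> rintro ⟨het, -⟩ <;> refine ⟨het, ?_⟩ <;>
              · have hv : v ∈ N := (hN v u het).resolve_right hu
                rcases hc with ⟨h', hc'⟩ | ⟨hn, -⟩
                · show EW c _
                  rw [show c = M ⟨v, h'⟩ from hc']
                  first
                    | exact (j2 ⟨v, h'⟩).1 het
                    | exact (j1 ⟨v, h'⟩).1 het
                · exact absurd hv hn
          · constructor <;> rintro ⟨het, -⟩ <;> refine ⟨het, ?_⟩ <;>
              · have hv : v ∈ N := (hN u v het).resolve_left hu
                rcases hc with ⟨h', hc'⟩ | ⟨hn, -⟩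
                · show EW _ c
                  rw [show c = M ⟨v, h'⟩ from hc']
                  first
                    | exact (j2 ⟨v, h'⟩).2 het
                    | exact (j1 ⟨v, h'⟩).2 het
                · exact absurd hv hn
        · constructor <;> rintro ⟨het, -⟩ <;>
            rcases hN u u het with hn | hn <;> exact absurd hn hu
      · left
        exact ⟨h1, fun h2 => h1 ((h u hu).mpr h2)⟩
  · intro h u hu
    rcases h u with ⟨hn1, hn2⟩ | ⟨hh1, hh2, -⟩
    · exact iff_of_false hn1 hn2
    · exact iff_of_true hh1 hh2
end

section
/- Structurally equivalent world vertices outside the matched set are node cover equivalent with respect to any partial match on a node cover whose candidate sets consist of joinable vertices. -/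
theorem structEquiv_imp_nodeCoverEquiv {VT VW : Type*}
    (ET : VT → VT → Prop) (EW : VW → VW → Prop)
    (N : Set VT) (hN : NodeCover ET N) (M : N → VW) (hM : PartialMatch ET EW N M)
    (w₁ w₂ : VW) (hse : StructEquiv EW w₁ w₂)
    (hw₁ : w₁ ∉ Set.range M) (hw₂ : w₂ ∉ Set.range M) :
    ∀ u : VT, u ∉ N → (Joinable ET EW N M u w₁ ↔ Joinable ET EW N M u w₂) := by
  intro u _
  have key : ∀ v : N, (EW (M v) w₁ ↔ EW (M v) w₂) ∧ (EW w₁ (M v) ↔ EW w₂ (M v)) := by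
    intro v
    exact hse.1 (M v) (fun h => hw₁ ⟨v, h⟩) (fun h => hw₂ ⟨v, h⟩)
  constructor <;> intro hj v <;> obtain ⟨h1, h2⟩ := hj v
  · exact ⟨fun h => ((key v).1).mp (h1 h), fun h => ((key v).2).mp (h2 h)⟩
  · exact ⟨fun h => ((key v).1).mpr (h1 h), fun h => ((key v).2).mpr (h2 h)⟩
end

section
/- The image of the set of vertices outside a node cover under any subgraph isomorphism is an independent set when restricted to edges among those images not forced by the cover; more precisely, if N is a node cover of G_T, then for any u, v ∈ V_T \ N there is no edge (u,v) in E_T, and hence any injective map on V_T \ N whose pairs are all joinable to a partial match M on N extends M to a subgraph isomorphism. -/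
open Classical in
theorem nodeCover_extension_subIso {VT VW : Type*}
    (ET : VT → VT → Prop) (EW : VW → VW → Prop)
    (N : Set VT) (hN : NodeCover ET N) (M : N → VW) (hM : PartialMatch ET EW N M)
    (g : {u : VT // u ∉ N} → VW) (hg_inj : Function.Injective g)
    (hg_avoid : ∀ u, g u ∉ Set.range M)
    (hg_join : ∀ u : {u : VT // u ∉ N}, Joinable ET EW N M u (g u)) :
    (∀ u v : VT, u ∉ N → v ∉ N → ¬ ET u v) ∧
    SubIso ET EW (fun u => if h : u ∈ N then M ⟨u, h⟩ else g ⟨u, h⟩) := by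
  have hind : ∀ u v : VT, u ∉ N → v ∉ N → ¬ ET u v := by
    intro u v hu hv h
    rcases hN u v h with h' | h' <;> [exact hu h'; exact hv h']
  refine ⟨hind, ?_, ?_⟩
  · intro a b hab
    by_cases ha : a ∈ N <;> by_cases hb : b ∈ N <;> simp only [ha, hb, dif_pos, dif_neg] at hab
    · exact congrArg Subtype.val (hM.1 hab)
    · exact absurd ⟨⟨a, ha⟩, hab⟩ (hg_avoid ⟨b, hb⟩)
    · exact absurd ⟨⟨b, hb⟩, hab.symm⟩ (hg_avoid ⟨a, ha⟩)
    · exact congrArg Subtype.val (hg_inj hab)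
  · intro a b hab
    by_cases ha : a ∈ N <;> by_cases hb : b ∈ N <;> simp only [ha, hb, dif_pos, dif_neg]
    · exact hM.2 ⟨a, ha⟩ ⟨b, hb⟩ hab
    · exact (hg_join ⟨b, hb⟩ ⟨a, ha⟩).1 hab
    · exact (hg_join ⟨a, ha⟩ ⟨b, hb⟩).2 hab
    · exact absurd hab (hind a b ha hb)
end
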